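/- arXiv:2202.04272 — 2 statements merged into one kernel-verified Lean document; each statement's English description precedes it below -/
import Mathlib

section
/- Let A be a bounded linear operator on H. Then for every α ∈ [0,1], η(A)⁴ ≤ ‖ |A|^{4α} + |A|⁴ ‖_ber · ‖ |A*|^{4(1−α)} + |A|⁴ ‖_ber; consequently η(A)⁴ ≤ min_{α∈[0,1]} ‖ |A|^{4α} + |A|⁴ ‖_ber · ‖ |A*|^{4(1−α)} + |A|⁴ ‖_ber. -/
open scoped InnerProductSpace
open ContinuousLinearMap

variable {H : Type*} [NormedAddCommGroup H] [InnerProductSpace ℂ H] [CompleteSpace H]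
variable {Ω : Type*} [Nonempty Ω]

/-- Berezin number: `ber(T) = sup_{λ∈Ω} |⟨T k̂_λ, k̂_λ⟩|`. -/
noncomputable def ber (k : Ω → H) (T : H →L[ℂ] H) : ℝ :=
  ⨆ lam : Ω, ‖⟪T (k lam), k lam⟫_ℂ‖

/-- Berezin norm: `‖T‖_ber = sup_{λ,μ∈Ω} |⟨T k̂_λ, k̂_μ⟩|`. -/
noncomputable def bernorm (k : Ω → H) (T : H →L[ℂ] H) : ℝ :=
  ⨆ p : Ω × Ω, ‖⟪T (k p.1), k p.2⟫_ℂ‖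

/-- Least Berezin number: `c(T) = inf_{λ∈Ω} |⟨T k̂_λ, k̂_λ⟩|`. -/
noncomputable def lber (k : Ω → H) (T : H →L[ℂ] H) : ℝ :=
  ⨅ lam : Ω, ‖⟪T (k lam), k lam⟫_ℂ‖

/-- Davis-Wielandt-Berezin radius: `η(T) = sup_{λ∈Ω} √(|⟨T k̂_λ, k̂_λ⟩|² + ‖T k̂_λ‖⁴)`. -/
noncomputable def eta (k : Ω → H) (T : H →L[ℂ] H) : ℝ :=
  ⨆ lam : Ω, Real.sqrt (‖⟪T (k lam), k lam⟫_ℂ‖ ^ 2 + ‖T (k lam)‖ ^ 4)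

/-- The modulus `|A| = (A*A)^{1/2}`. -/
noncomputable def absop (A : H →L[ℂ] H) : H →L[ℂ] H := CFC.sqrt (adjoint A * A)

/- ## Auxiliary material -/

open RCLike Polynomial
open scoped NNReal

set_option maxHeartbeats 1000000
set_option synthInstance.maxHeartbeats 400000

section Aux

lemma cont_aux (ε c : ℝ) (hε : 0 < ε) : Continuous (fun t : ℝ => ((t.toNNReal : ℝ) + ε) ^ c) := by
  have h1 : Continuous (fun t : ℝ => (t.toNNReal : ℝ) + ε) := by
    simp only [Real.coe_toNNReal']
    exact (continuous_id.max continuous_const).add continuous_const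
  exact h1.rpow_const (fun x => Or.inl (by positivity))

lemma cont_g (c : ℝ) (hc : 0 ≤ c) : Continuous (fun t : ℝ => ((t.toNNReal : ℝ)) ^ c) := by
  have h1 : Continuous (fun t : ℝ => (t.toNNReal : ℝ)) := by
    simp only [Real.coe_toNNReal']
    exact continuous_id.max continuous_const
  exact h1.rpow_const (fun x => Or.inr hc)

lemma inner_selfAdjoint_move {S : H →L[ℂ] H} (hS : IsSelfAdjoint S) (y x : H) :
    ⟪S y, x⟫_ℂ = ⟪y, S x⟫_ℂ := by
  conv_lhs => rw [← hS.adjoint_eq]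
  exact adjoint_inner_left S x y

lemma re_inner_mono {S T : H →L[ℂ] H} (h : S ≤ T) (x : H) : re ⟪S x, x⟫_ℂ ≤ re ⟪T x, x⟫_ℂ := by
  have h2 := (ContinuousLinearMap.le_def S T).mp h |>.re_inner_nonneg_left x
  simp only [sub_apply, inner_sub_left, map_sub] at h2
  linarith

lemma rpow_subadd {x y : ℝ} (hx : 0 ≤ x) (hy : 0 ≤ y) {p : ℝ} (h1 : 0 ≤ p) (h2 : p ≤ 1) :
    (x + y) ^ p ≤ x ^ p + y ^ p := by
  have := NNReal.rpow_add_le_add_rpow x.toNNReal y.toNNReal h1 h2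
  have hc : ((x.toNNReal + y.toNNReal : ℝ≥0) : ℝ) = x + y := by
    simp [Real.coe_toNNReal _ hx, Real.coe_toNNReal _ hy]
  calc (x + y) ^ p = (((x.toNNReal + y.toNNReal : ℝ≥0) : ℝ)) ^ p := by rw [hc]
    _ = (((x.toNNReal + y.toNNReal : ℝ≥0) ^ p : ℝ≥0) : ℝ) := by rw [← NNReal.coe_rpow]
    _ ≤ ((x.toNNReal ^ p + y.toNNReal ^ p : ℝ≥0) : ℝ) := by exact_mod_cast this
    _ = x ^ p + y ^ p := by
        push_cast [NNReal.coe_rpow]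
        rw [Real.coe_toNNReal _ hx, Real.coe_toNNReal _ hy]

lemma rpow_shift_le {β δ : ℝ} (hβ0 : 0 ≤ β) (hβ1 : β ≤ 1) (hδ : 0 < δ) :
    ∃ ε0 : ℝ, 0 < ε0 ∧ ∀ ε : ℝ, 0 < ε → ε ≤ ε0 → ∀ s : ℝ, 0 ≤ s → (s + ε) ^ β ≤ s ^ β + δ := by
  rcases eq_or_lt_of_le hβ0 with h0 | h0
  · refine ⟨1, one_pos, fun ε hε _ s hs => ?_⟩
    rw [← h0, Real.rpow_zero, Real.rpow_zero]
    linarith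
  · refine ⟨min (δ ^ (1/β)) 1, lt_min (Real.rpow_pos_of_pos hδ _) one_pos,
      fun ε hε hεle s hs => ?_⟩
    have h1 : (s + ε) ^ β ≤ s ^ β + ε ^ β := rpow_subadd hs hε.le hβ0 hβ1
    have h2 : ε ^ β ≤ δ := by
      calc ε ^ β ≤ (δ ^ (1/β)) ^ β :=
            Real.rpow_le_rpow hε.le (hεle.trans (min_le_left _ _)) hβ0
        _ = δ ^ ((1/β) * β) := (Real.rpow_mul hδ.le _ _).symm
        _ = δ := by rw [one_div_mul_cancel h0.ne', Real.rpow_one]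
    linarith

lemma pow_intertwine (A : H →L[ℂ] H) (n : ℕ) :
    A * (adjoint A * A) ^ n = (A * adjoint A) ^ n * A := by
  induction n with
  | zero => simp
  | succ n ih =>
    rw [pow_succ, ← mul_assoc, ih, pow_succ]
    noncomm_ring

lemma aeval_intertwine (A : H →L[ℂ] H) (q : ℝ[X]) :
    A * (aeval (adjoint A * A) q) = aeval (A * adjoint A) q * A := by
  induction q using Polynomial.induction_on with
  | C r => simp [Algebra.algebraMap_eq_smul_one]
  | add p q hp hq => simp [mul_add, add_mul, hp, hq]
  | monomial n r _ =>
    simp only [map_mul, aeval_C, map_pow, aeval_X]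
    calc A * (algebraMap ℝ _ r * (adjoint A * A) ^ (n+1))
        = algebraMap ℝ _ r * (A * (adjoint A * A) ^ (n+1)) := by
          simp [Algebra.algebraMap_eq_smul_one, mul_smul_comm, smul_mul_assoc]
      _ = algebraMap ℝ _ r * ((A * adjoint A) ^ (n+1) * A) := by rw [pow_intertwine]
      _ = algebraMap ℝ _ r * (A * adjoint A) ^ (n+1) * A := by rw [mul_assoc]

lemma spectrum_mem_Icc {T : H →L[ℂ] H} (hT : 0 ≤ T) {M : ℝ} (hM : ‖T‖ * ‖(1 : H →L[ℂ] H)‖ ≤ M)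
    {t : ℝ} (ht : t ∈ spectrum ℝ T) : t ∈ Set.Icc 0 M := by
  refine ⟨spectrum_nonneg_of_nonneg hT ht, ?_⟩
  calc t ≤ ‖t‖ := le_abs_self t
    _ ≤ ‖T‖ * ‖(1 : H →L[ℂ] H)‖ := spectrum.norm_le_norm_mul_of_mem ht
    _ ≤ M := hM

lemma cfc_intertwine (A : H →L[ℂ] H) (f : ℝ → ℝ) (hf : Continuous f) :
    A * cfc f (adjoint A * A) = cfc f (A * adjoint A) * A := by
  set B := adjoint A * A with hBdef
  set C := A * adjoint A with hCdef
  have hB : 0 ≤ B := by rw [hBdef, ← star_eq_adjoint]; exact star_mul_self_nonneg A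
  have hC : 0 ≤ C := by rw [hCdef, ← star_eq_adjoint]; exact mul_star_self_nonneg A
  rw [← sub_eq_zero, ← norm_le_zero_iff]
  refine le_of_forall_pos_le_add (fun ε hε => ?_)
  rw [zero_add]
  set M : ℝ := max ‖B‖ ‖C‖ * ‖(1 : H →L[ℂ] H)‖ with hM
  set δ : ℝ := ε / (2 * ‖A‖ + 1) with hδ
  have hδpos : 0 < δ := by positivity
  obtain ⟨q, hq⟩ := exists_polynomial_near_of_continuousOn 0 M f (hf.continuousOn) δ hδpos
  have hBs : ∀ t ∈ spectrum ℝ B, ‖f t - q.eval t‖ ≤ δ := by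
    intro t ht
    have := hq t (spectrum_mem_Icc hB (by rw [hM]; exact mul_le_mul_of_nonneg_right (le_max_left _ _) (norm_nonneg _)) ht)
    rw [Real.norm_eq_abs, abs_sub_comm]; exact this.le
  have hCs : ∀ t ∈ spectrum ℝ C, ‖f t - q.eval t‖ ≤ δ := by
    intro t ht
    have := hq t (spectrum_mem_Icc hC (by rw [hM]; exact mul_le_mul_of_nonneg_right (le_max_right _ _) (norm_nonneg _)) ht)
    rw [Real.norm_eq_abs, abs_sub_comm]; exact this.le
  have h1 : ‖cfc f B - aeval B q‖ ≤ δ := by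
    rw [← cfc_polynomial q B hB.isSelfAdjoint, ← cfc_sub f q.eval B hf.continuousOn q.continuous.continuousOn]
    exact norm_cfc_le hδpos.le hBs
  have h2 : ‖cfc f C - aeval C q‖ ≤ δ := by
    rw [← cfc_polynomial q C hC.isSelfAdjoint, ← cfc_sub f q.eval C hf.continuousOn q.continuous.continuousOn]
    exact norm_cfc_le hδpos.le hCs
  have key : A * cfc f B - cfc f C * A
      = A * (cfc f B - aeval B q) - (cfc f C - aeval C q) * A := by
    rw [mul_sub, sub_mul, ← aeval_intertwine A q]
    abel
  rw [key]
  calc ‖A * (cfc f B - aeval B q) - (cfc f C - aeval C q) * A‖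
      ≤ ‖A * (cfc f B - aeval B q)‖ + ‖(cfc f C - aeval C q) * A‖ := norm_sub_le _ _
    _ ≤ ‖A‖ * δ + δ * ‖A‖ := add_le_add
        ((norm_mul_le _ _).trans (mul_le_mul_of_nonneg_left h1 (norm_nonneg A)))
        ((norm_mul_le _ _).trans (mul_le_mul_of_nonneg_right h2 (norm_nonneg A)))
    _ ≤ ε := by
        have h0 : (0:ℝ) < 2 * ‖A‖ + 1 := by positivity
        rw [hδ]
        have heq : ‖A‖ * (ε / (2 * ‖A‖ + 1)) + ε / (2 * ‖A‖ + 1) * ‖A‖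
            = 2 * ‖A‖ * ε / (2 * ‖A‖ + 1) := by ring
        rw [heq, div_le_iff₀ h0]
        nlinarith [norm_nonneg A, hε.le]

lemma kato (A : H →L[ℂ] H) {α : ℝ} (hα : α ∈ Set.Icc (0:ℝ) 1) {x : H} (hx : ‖x‖ = 1) :
    ‖⟪A x, x⟫_ℂ‖ ^ 2 ≤
      re ⟪cfc (fun t : ℝ => ((t.toNNReal : ℝ)) ^ α) (adjoint A * A) x, x⟫_ℂ *
        re ⟪cfc (fun t : ℝ => ((t.toNNReal : ℝ)) ^ (1 - α)) (A * adjoint A) x, x⟫_ℂ := by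
  obtain ⟨hα0, hα1⟩ := hα
  set B := adjoint A * A with hBdef
  set C := A * adjoint A with hCdef
  have hB : 0 ≤ B := by rw [hBdef, ← star_eq_adjoint]; exact star_mul_self_nonneg A
  have hC : 0 ≤ C := by rw [hCdef, ← star_eq_adjoint]; exact mul_star_self_nonneg A
  have hBsa : IsSelfAdjoint B := hB.isSelfAdjoint
  have hCsa : IsSelfAdjoint C := hC.isSelfAdjoint
  have hgα : Continuous (fun t : ℝ => ((t.toNNReal : ℝ)) ^ α) := cont_g α hα0
  have hgβ : Continuous (fun t : ℝ => ((t.toNNReal : ℝ)) ^ (1 - α)) := cont_g _ (by linarith)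
  set a := re ⟪cfc (fun t : ℝ => ((t.toNNReal : ℝ)) ^ α) B x, x⟫_ℂ with hadef
  set b := re ⟪cfc (fun t : ℝ => ((t.toNNReal : ℝ)) ^ (1 - α)) C x, x⟫_ℂ with hbdef
  have ha0 : 0 ≤ a := by
    refine ((ContinuousLinearMap.nonneg_iff_isPositive _).mp ?_).re_inner_nonneg_left x
    exact cfc_nonneg (fun t _ => Real.rpow_nonneg (NNReal.coe_nonneg _) _)
  have hb0 : 0 ≤ b := by
    refine ((ContinuousLinearMap.nonneg_iff_isPositive _).mp ?_).re_inner_nonneg_left x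
    exact cfc_nonneg (fun t _ => Real.rpow_nonneg (NNReal.coe_nonneg _) _)
  have step : ∀ δ : ℝ, 0 < δ → ‖⟪A x, x⟫_ℂ‖ ^ 2 ≤ (a + δ) * (b + δ) := by
    intro δ hδ
    obtain ⟨ε1, hε1, hP1⟩ := rpow_shift_le hα0 hα1 hδ
    obtain ⟨ε2, hε2, hP2⟩ := rpow_shift_le (by linarith : (0:ℝ) ≤ 1 - α) (by linarith) hδ
    set ε := min ε1 ε2 with hεdef
    have hε : 0 < ε := lt_min hε1 hε2
    set φ : ℝ → ℝ := fun t => ((t.toNNReal : ℝ) + ε) ^ ((α - 1)/2) with hφdef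
    set ψ : ℝ → ℝ := fun t => ((t.toNNReal : ℝ) + ε) ^ ((1 - α)/2) with hψdef
    have hφc : Continuous φ := cont_aux ε _ hε
    have hψc : Continuous ψ := cont_aux ε _ hε
    have hbase : ∀ t : ℝ, 0 < (t.toNNReal : ℝ) + ε := fun t => by positivity
    have hψφ : cfc ψ B * cfc φ B = 1 := by
      rw [← cfc_mul ψ φ B hψc.continuousOn hφc.continuousOn]
      have : (fun t => ψ t * φ t) = fun _ : ℝ => (1:ℝ) := by
        funext t
        rw [hψdef, hφdef]
        simp only
        rw [← Real.rpow_add (hbase t)]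
        have he : (1 - α)/2 + (α - 1)/2 = 0 := by ring
        rw [he, Real.rpow_zero]
      rw [this, cfc_const_one ℝ B hBsa]
    have hAeq : A = cfc ψ C * A * cfc φ B := by
      calc A = A * (cfc ψ B * cfc φ B) := by rw [hψφ, mul_one]
        _ = (A * cfc ψ B) * cfc φ B := by rw [mul_assoc]
        _ = (cfc ψ C * A) * cfc φ B := by rw [cfc_intertwine A ψ hψc]
    set u := cfc φ B x with hu
    set v := cfc ψ C x with hv
    have hφsa : IsSelfAdjoint (cfc φ B) := cfc_predicate φ B
    have hψsa : IsSelfAdjoint (cfc ψ C) := cfc_predicate ψ C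
    have hinner : ⟪A x, x⟫_ℂ = ⟪A u, v⟫_ℂ := by
      conv_lhs => rw [hAeq]
      have h5 : (cfc ψ C * A * cfc φ B) x = cfc ψ C (A u) := by
        simp [ContinuousLinearMap.mul_apply, hu]
      rw [h5, inner_selfAdjoint_move hψsa (A u) x]
    have hAu2 : ‖A u‖ ^ 2 ≤ a + δ := by
      have e0 : (‖A u‖ : ℝ) ^ 2 = re ⟪(cfc φ B * B * cfc φ B) x, x⟫_ℂ := by
        have e1 : ⟪A u, A u⟫_ℂ = ⟪B u, u⟫_ℂ := by
          rw [hBdef]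
          rw [ContinuousLinearMap.mul_apply]
          exact (adjoint_inner_left A u (A u)).symm
        have e2 : ⟪B u, u⟫_ℂ = ⟪(cfc φ B * B * cfc φ B) x, x⟫_ℂ := by
          rw [hu, ← inner_selfAdjoint_move hφsa (B (cfc φ B x)) x]
          simp [ContinuousLinearMap.mul_apply]
        rw [← inner_self_eq_norm_sq (𝕜 := ℂ) (A u), e1, e2]
      rw [e0]
      have T1eq : cfc φ B * B * cfc φ B = cfc (fun t => φ t * t * φ t) B := by
        have e2 : cfc (fun t : ℝ => φ t * t) B = cfc φ B * cfc (fun t : ℝ => t) B :=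
          cfc_mul φ _ B hφc.continuousOn continuousOn_id
        have e1 : cfc (fun t : ℝ => φ t * t * φ t) B
            = cfc (fun t : ℝ => φ t * t) B * cfc φ B :=
          cfc_mul _ φ B (hφc.continuousOn.mul continuousOn_id) hφc.continuousOn
        rw [e1, e2, cfc_id' ℝ B hBsa]
      rw [T1eq]
      have hmono : cfc (fun t => φ t * t * φ t) B
          ≤ cfc (fun t : ℝ => ((t.toNNReal : ℝ)) ^ α + δ) B := by
        refine cfc_mono (fun t ht => ?_) ?_ ?_
        · have ht0 : 0 ≤ t := spectrum_nonneg_of_nonneg hB ht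
          have htn : ((t.toNNReal : ℝ)) = t := Real.coe_toNNReal t ht0
          rw [hφdef]
          simp only [htn]
          have hb0 : (0:ℝ) < t + ε := by linarith
          have c1 : (t + ε) ^ ((α - 1)/2) * t * (t + ε) ^ ((α - 1)/2)
              = t * (t + ε) ^ (α - 1) := by
            rw [mul_comm _ t, mul_assoc, ← Real.rpow_add hb0]
            norm_num
          rw [c1]
          have c2 : t * (t + ε) ^ (α - 1) ≤ (t + ε) * (t + ε) ^ (α - 1) :=
            mul_le_mul_of_nonneg_right (by linarith) (Real.rpow_nonneg hb0.le _)
          have c3 : (t + ε) * (t + ε) ^ (α - 1) = (t + ε) ^ α := by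
            nth_rewrite 1 [← Real.rpow_one (t + ε)]
            rw [← Real.rpow_add hb0]
            norm_num
          have c4 : (t + ε) ^ α ≤ t ^ α + δ :=
            hP1 ε hε (min_le_left _ _) t ht0
          linarith
        · exact ((hφc.mul continuous_id).mul hφc).continuousOn
        · exact (hgα.add continuous_const).continuousOn
      refine (re_inner_mono hmono x).trans ?_
      have hsplit : cfc (fun t : ℝ => ((t.toNNReal : ℝ)) ^ α + δ) B
          = cfc (fun t : ℝ => ((t.toNNReal : ℝ)) ^ α) B + algebraMap ℝ _ δ := by
        rw [cfc_add B _ _ hgα.continuousOn continuousOn_const, cfc_const δ B hBsa]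
      rw [hsplit]
      have : re ⟪(algebraMap ℝ (H →L[ℂ] H) δ) x, x⟫_ℂ = δ := by
        rw [Algebra.algebraMap_eq_smul_one]
        simp only [ContinuousLinearMap.smul_apply, ContinuousLinearMap.one_apply]
        have hsm : (δ • x : H) = (δ : ℂ) • x := RCLike.real_smul_eq_coe_smul (K := ℂ) δ x
        rw [hsm, inner_smul_left, inner_self_eq_norm_sq_to_K (𝕜 := ℂ), hx]
        simp
      simp only [add_apply, inner_add_left, map_add, this, hadef]
      exact le_rfl
    have hv2 : ‖v‖ ^ 2 ≤ b + δ := by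
      have e0 : (‖v‖ : ℝ) ^ 2 = re ⟪(cfc ψ C * cfc ψ C) x, x⟫_ℂ := by
        have e2 : ⟪v, v⟫_ℂ = ⟪(cfc ψ C * cfc ψ C) x, x⟫_ℂ := by
          rw [hv, ← inner_selfAdjoint_move hψsa (cfc ψ C x) x]
          simp [ContinuousLinearMap.mul_apply]
        rw [← inner_self_eq_norm_sq (𝕜 := ℂ) v, e2]
      rw [e0]
      have T2eq : cfc ψ C * cfc ψ C = cfc (fun t => ψ t * ψ t) C :=
        (cfc_mul ψ ψ C hψc.continuousOn hψc.continuousOn).symm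
      rw [T2eq]
      have hmono : cfc (fun t => ψ t * ψ t) C
          ≤ cfc (fun t : ℝ => ((t.toNNReal : ℝ)) ^ (1 - α) + δ) C := by
        refine cfc_mono (fun t ht => ?_) ?_ ?_
        · have ht0 : 0 ≤ t := spectrum_nonneg_of_nonneg hC ht
          have htn : ((t.toNNReal : ℝ)) = t := Real.coe_toNNReal t ht0
          rw [hψdef]
          simp only [htn]
          have hb0 : (0:ℝ) < t + ε := by linarith
          have c1 : (t + ε) ^ ((1 - α)/2) * (t + ε) ^ ((1 - α)/2) = (t + ε) ^ (1 - α) := by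
            rw [← Real.rpow_add hb0]
            norm_num
          rw [c1]
          have c4 : (t + ε) ^ (1 - α) ≤ t ^ (1 - α) + δ :=
            hP2 ε hε (min_le_right _ _) t ht0
          linarith
        · exact (hψc.mul hψc).continuousOn
        · exact (hgβ.add continuous_const).continuousOn
      refine (re_inner_mono hmono x).trans ?_
      have hsplit : cfc (fun t : ℝ => ((t.toNNReal : ℝ)) ^ (1 - α) + δ) C
          = cfc (fun t : ℝ => ((t.toNNReal : ℝ)) ^ (1 - α)) C + algebraMap ℝ _ δ := by
        rw [cfc_add C _ _ hgβ.continuousOn continuousOn_const, cfc_const δ C hCsa]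
      rw [hsplit]
      have : re ⟪(algebraMap ℝ (H →L[ℂ] H) δ) x, x⟫_ℂ = δ := by
        rw [Algebra.algebraMap_eq_smul_one]
        simp only [ContinuousLinearMap.smul_apply, ContinuousLinearMap.one_apply]
        have hsm : (δ • x : H) = (δ : ℂ) • x := RCLike.real_smul_eq_coe_smul (K := ℂ) δ x
        rw [hsm, inner_smul_left, inner_self_eq_norm_sq_to_K (𝕜 := ℂ), hx]
        simp
      simp only [add_apply, inner_add_left, map_add, this, hbdef]
      exact le_rfl
    calc ‖⟪A x, x⟫_ℂ‖ ^ 2 = ‖⟪A u, v⟫_ℂ‖ ^ 2 := by rw [hinner]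
      _ ≤ (‖A u‖ * ‖v‖) ^ 2 := by
          have := norm_inner_le_norm (𝕜 := ℂ) (A u) v
          exact pow_le_pow_left₀ (norm_nonneg _) this 2
      _ = ‖A u‖ ^ 2 * ‖v‖ ^ 2 := by ring
      _ ≤ (a + δ) * (b + δ) := by
          refine mul_le_mul hAu2 hv2 (by positivity) (by linarith)
  refine le_of_forall_pos_le_add (fun η hη => ?_)
  have hden : (0:ℝ) < a + b + 1 := by linarith
  set δ := min 1 (η / (a + b + 1)) with hδdef
  have hδpos : 0 < δ := lt_min one_pos (by positivity)
  have hδ1 : δ ≤ 1 := min_le_left _ _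
  have hδη : δ * (a + b + 1) ≤ η := by
    rw [← le_div_iff₀ hden]
    exact min_le_right _ _
  have hstep := step δ hδpos
  nlinarith [mul_le_mul_of_nonneg_left hδ1 hδpos.le]

lemma sq_re_inner_le {T : H →L[ℂ] H} (hT : IsSelfAdjoint T) {x : H} (hx : ‖x‖ = 1) :
    (re ⟪T x, x⟫_ℂ) ^ 2 ≤ re ⟪(T * T) x, x⟫_ℂ := by
  have h1 : ⟪(T * T) x, x⟫_ℂ = ⟪T x, T x⟫_ℂ := by
    rw [ContinuousLinearMap.mul_apply]
    exact inner_selfAdjoint_move hT (T x) x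
  rw [h1, inner_self_eq_norm_sq (𝕜 := ℂ)]
  have h2 : ‖⟪T x, x⟫_ℂ‖ ≤ ‖T x‖ := by
    simpa [hx] using norm_inner_le_norm (𝕜 := ℂ) (T x) x
  have h3 := abs_re_le_norm ⟪T x, x⟫_ℂ
  calc (re ⟪T x, x⟫_ℂ) ^ 2 = |re ⟪T x, x⟫_ℂ| ^ 2 := (sq_abs _).symm
    _ ≤ ‖T x‖ ^ 2 := pow_le_pow_left₀ (abs_nonneg _) (h3.trans h2) 2

lemma cfc_g_sq {T : H →L[ℂ] H} (hT : 0 ≤ T) {y : ℝ} (hy : 0 ≤ y) :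
    cfc (fun t : ℝ => ((t.toNNReal : ℝ)) ^ y) T * cfc (fun t : ℝ => ((t.toNNReal : ℝ)) ^ y) T
      = cfc (fun t : ℝ => ((t.toNNReal : ℝ)) ^ (2*y)) T := by
  rw [← cfc_mul _ _ T (cont_g y hy).continuousOn (cont_g y hy).continuousOn]
  refine cfc_congr (fun t _ => ?_)
  rcases eq_or_lt_of_le hy with h0 | h0
  · rw [← h0]
    norm_num
  · rw [← Real.rpow_add' (NNReal.coe_nonneg _) (by intro h; nlinarith : y + y ≠ 0), two_mul]

lemma rpow_sqrt_eq {T : H →L[ℂ] H} (hT : 0 ≤ T) {y : ℝ} (hy : 0 ≤ y) :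
    CFC.rpow (CFC.sqrt T) (2 * y) = cfc (fun t : ℝ => ((t.toNNReal : ℝ)) ^ y) T := by
  have h1 : CFC.sqrt T = CFC.rpow T (1/2 : ℝ) := CFC.sqrt_eq_rpow
  rw [h1]
  have h2 : CFC.rpow (CFC.rpow T (1/2 : ℝ)) (2 * y) = CFC.rpow T ((1/2) * (2 * y)) :=
    CFC.rpow_rpow_of_exponent_nonneg T (1/2) (2*y) (by norm_num) (by linarith) hT
  rw [h2]
  have h3 : (1/2 : ℝ) * (2 * y) = y := by ring
  rw [h3]
  have h4 : CFC.rpow T y = cfc (fun s : ℝ≥0 => s ^ y) T := rfl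
  rw [h4, cfc_nnreal_eq_real (fun s : ℝ≥0 => s ^ y) T hT]
  exact cfc_congr (fun t _ => NNReal.coe_rpow _ _)

lemma core_ineq (A : H →L[ℂ] H) {α : ℝ} (hα : α ∈ Set.Icc (0:ℝ) 1) {x : H} (hx : ‖x‖ = 1) :
    (‖⟪A x, x⟫_ℂ‖ ^ 2 + ‖A x‖ ^ 4) ^ 2 ≤
      re ⟪(cfc (fun t : ℝ => ((t.toNNReal : ℝ)) ^ (2*α)) (adjoint A * A)
            + (adjoint A * A) ^ 2) x, x⟫_ℂ *
        re ⟪(cfc (fun t : ℝ => ((t.toNNReal : ℝ)) ^ (2*(1-α))) (A * adjoint A)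
            + (adjoint A * A) ^ 2) x, x⟫_ℂ := by
  obtain ⟨hα0, hα1⟩ := hα
  set B := adjoint A * A with hBdef
  set C := A * adjoint A with hCdef
  have hB : 0 ≤ B := by rw [hBdef, ← star_eq_adjoint]; exact star_mul_self_nonneg A
  have hC : 0 ≤ C := by rw [hCdef, ← star_eq_adjoint]; exact mul_star_self_nonneg A
  have hBsa : IsSelfAdjoint B := hB.isSelfAdjoint
  have hCsa : IsSelfAdjoint C := hC.isSelfAdjoint
  set a := re ⟪cfc (fun t : ℝ => ((t.toNNReal : ℝ)) ^ α) B x, x⟫_ℂ with hadef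
  set b := re ⟪cfc (fun t : ℝ => ((t.toNNReal : ℝ)) ^ (1 - α)) C x, x⟫_ℂ with hbdef
  set c := re ⟪B x, x⟫_ℂ with hcdef
  set a2 := re ⟪cfc (fun t : ℝ => ((t.toNNReal : ℝ)) ^ (2*α)) B x, x⟫_ℂ with ha2def
  set b2 := re ⟪cfc (fun t : ℝ => ((t.toNNReal : ℝ)) ^ (2*(1-α))) C x, x⟫_ℂ with hb2def
  set c2 := re ⟪(B ^ 2) x, x⟫_ℂ with hc2def
  have ha0 : 0 ≤ a := by
    refine ((ContinuousLinearMap.nonneg_iff_isPositive _).mp ?_).re_inner_nonneg_left x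
    exact cfc_nonneg (fun t _ => Real.rpow_nonneg (NNReal.coe_nonneg _) _)
  have hb0 : 0 ≤ b := by
    refine ((ContinuousLinearMap.nonneg_iff_isPositive _).mp ?_).re_inner_nonneg_left x
    exact cfc_nonneg (fun t _ => Real.rpow_nonneg (NNReal.coe_nonneg _) _)
  have hK : ‖⟪A x, x⟫_ℂ‖ ^ 2 ≤ a * b := kato A ⟨hα0, hα1⟩ hx
  have hc : ‖A x‖ ^ 2 = c := by
    rw [hcdef, hBdef, ContinuousLinearMap.mul_apply]
    rw [adjoint_inner_left A x (A x), inner_self_eq_norm_sq (𝕜 := ℂ)]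
  have hc0 : 0 ≤ c := by rw [← hc]; positivity
  have ha2 : a ^ 2 ≤ a2 := by
    have h := sq_re_inner_le (cfc_predicate (fun t : ℝ => ((t.toNNReal : ℝ)) ^ α) B) hx
    rwa [cfc_g_sq hB hα0] at h
  have hb2 : b ^ 2 ≤ b2 := by
    have h := sq_re_inner_le (cfc_predicate (fun t : ℝ => ((t.toNNReal : ℝ)) ^ (1 - α)) C) hx
    rwa [cfc_g_sq hC (by linarith)] at h
  have hc2 : c ^ 2 ≤ c2 := by
    have h := sq_re_inner_le hBsa hx
    rwa [← pow_two] at h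
  have h4 : ‖A x‖ ^ 4 = c ^ 2 := by rw [← hc]; ring
  calc (‖⟪A x, x⟫_ℂ‖ ^ 2 + ‖A x‖ ^ 4) ^ 2
      ≤ (a * b + c ^ 2) ^ 2 := by
        refine pow_le_pow_left₀ (by positivity) ?_ 2
        rw [h4]
        linarith
    _ ≤ (a ^ 2 + c ^ 2) * (b ^ 2 + c ^ 2) := by nlinarith [sq_nonneg ((a - b) * c)]
    _ ≤ (a2 + c2) * (b2 + c2) := by
        refine mul_le_mul (add_le_add ha2 hc2) (add_le_add hb2 hc2) (by positivity) ?_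
        exact le_trans (by positivity) (add_le_add ha2 hc2)
    _ = _ := by
        simp only [ha2def, hb2def, hc2def, add_apply, inner_add_left, map_add]

lemma bernorm_bddAbove (k : Ω → H) (hk : ∀ lam, ‖k lam‖ = 1) (T : H →L[ℂ] H) :
    BddAbove (Set.range fun p : Ω × Ω => ‖⟪T (k p.1), k p.2⟫_ℂ‖) := by
  refine ⟨‖T‖, ?_⟩
  rintro r ⟨p, rfl⟩
  calc ‖⟪T (k p.1), k p.2⟫_ℂ‖ ≤ ‖T (k p.1)‖ * ‖k p.2‖ := norm_inner_le_norm _ _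
    _ ≤ (‖T‖ * ‖k p.1‖) * ‖k p.2‖ :=
        mul_le_mul_of_nonneg_right (T.le_opNorm _) (norm_nonneg _)
    _ = ‖T‖ := by rw [hk p.1, hk p.2]; ring

lemma diag_le_bernorm (k : Ω → H) (hk : ∀ lam, ‖k lam‖ = 1) (T : H →L[ℂ] H) (lam : Ω) :
    ‖⟪T (k lam), k lam⟫_ℂ‖ ≤ bernorm k T :=
  le_ciSup (bernorm_bddAbove k hk T) (lam, lam)

lemma bernorm_nonneg (k : Ω → H) (T : H →L[ℂ] H) : 0 ≤ bernorm k T :=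
  Real.iSup_nonneg (fun _ => norm_nonneg _)

end Aux

theorem stmt9 (k : Ω → H) (hk : ∀ lam, ‖k lam‖ = 1) (A : H →L[ℂ] H) :
    (∀ α ∈ Set.Icc (0 : ℝ) 1,
        (eta k A) ^ 4 ≤
          bernorm k (CFC.rpow (absop A) (4 * α) + (absop A) ^ 4) *
            bernorm k (CFC.rpow (absop (adjoint A)) (4 * (1 - α)) + (absop A) ^ 4)) ∧
      (eta k A) ^ 4 ≤
        ⨅ α : Set.Icc (0 : ℝ) 1,
          bernorm k (CFC.rpow (absop A) (4 * (α : ℝ)) + (absop A) ^ 4) *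
            bernorm k (CFC.rpow (absop (adjoint A)) (4 * (1 - (α : ℝ))) + (absop A) ^ 4) := by
  have hB : 0 ≤ adjoint A * A := by rw [← star_eq_adjoint]; exact star_mul_self_nonneg A
  have hC : 0 ≤ A * adjoint A := by rw [← star_eq_adjoint]; exact mul_star_self_nonneg A
  have hBsa : IsSelfAdjoint (adjoint A * A) := hB.isSelfAdjoint
  have key : ∀ α ∈ Set.Icc (0 : ℝ) 1,
      (eta k A) ^ 4 ≤
        bernorm k (CFC.rpow (absop A) (4 * α) + (absop A) ^ 4) *
          bernorm k (CFC.rpow (absop (adjoint A)) (4 * (1 - α)) + (absop A) ^ 4) := by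
    intro α hα
    obtain ⟨hα0, hα1⟩ := hα
    have e1 : CFC.rpow (absop A) (4 * α)
        = cfc (fun t : ℝ => ((t.toNNReal : ℝ)) ^ (2*α)) (adjoint A * A) := by
      rw [absop, show (4:ℝ) * α = 2 * (2*α) by ring, rpow_sqrt_eq hB (by linarith)]
    have e2 : CFC.rpow (absop (adjoint A)) (4 * (1 - α))
        = cfc (fun t : ℝ => ((t.toNNReal : ℝ)) ^ (2*(1-α))) (A * adjoint A) := by
      rw [absop, adjoint_adjoint, show (4:ℝ) * (1 - α) = 2 * (2*(1-α)) by ring,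
        rpow_sqrt_eq hC (by linarith)]
    have e3 : (absop A) ^ 4 = (adjoint A * A) ^ 2 := by
      rw [absop, show (4:ℕ) = 2*2 from rfl, pow_mul, CFC.sq_sqrt _ hB]
    rw [e1, e2, e3]
    set P1 := cfc (fun t : ℝ => ((t.toNNReal : ℝ)) ^ (2*α)) (adjoint A * A)
        + (adjoint A * A) ^ 2 with hP1def
    set P2 := cfc (fun t : ℝ => ((t.toNNReal : ℝ)) ^ (2*(1-α))) (A * adjoint A)
        + (adjoint A * A) ^ 2 with hP2def
    have hBsq : 0 ≤ (adjoint A * A) ^ 2 := by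
      rw [pow_two]
      nth_rewrite 1 [← hBsa.star_eq]
      exact star_mul_self_nonneg _
    have hP1pos : (0 : H →L[ℂ] H) ≤ P1 := by
      rw [hP1def]
      rw [ContinuousLinearMap.nonneg_iff_isPositive]
      exact IsPositive.add
        ((ContinuousLinearMap.nonneg_iff_isPositive _).mp
          (cfc_nonneg (fun t _ => Real.rpow_nonneg (NNReal.coe_nonneg _) _)))
        ((ContinuousLinearMap.nonneg_iff_isPositive _).mp hBsq)
    have hP2pos : (0 : H →L[ℂ] H) ≤ P2 := by
      rw [hP2def]
      rw [ContinuousLinearMap.nonneg_iff_isPositive]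
      exact IsPositive.add
        ((ContinuousLinearMap.nonneg_iff_isPositive _).mp
          (cfc_nonneg (fun t _ => Real.rpow_nonneg (NNReal.coe_nonneg _) _)))
        ((ContinuousLinearMap.nonneg_iff_isPositive _).mp hBsq)
    set N : ℝ := bernorm k P1 * bernorm k P2 with hNdef
    have hN0 : 0 ≤ N := mul_nonneg (bernorm_nonneg k P1) (bernorm_nonneg k P2)
    have hlam : ∀ lam : Ω,
        (‖⟪A (k lam), k lam⟫_ℂ‖ ^ 2 + ‖A (k lam)‖ ^ 4) ^ 2 ≤ N := by
      intro lam
      refine (core_ineq A ⟨hα0, hα1⟩ (hk lam)).trans ?_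
      refine mul_le_mul ?_ ?_ ?_ (bernorm_nonneg k P1)
      · exact (re_le_norm _).trans (diag_le_bernorm k hk P1 lam)
      · exact (re_le_norm _).trans (diag_le_bernorm k hk P2 lam)
      · exact ((ContinuousLinearMap.nonneg_iff_isPositive P2).mp hP2pos).re_inner_nonneg_left _
    have heta0 : 0 ≤ eta k A := Real.iSup_nonneg (fun _ => Real.sqrt_nonneg _)
    have heta : eta k A ≤ Real.sqrt (Real.sqrt N) := by
      refine ciSup_le (fun lam => ?_)
      refine Real.sqrt_le_sqrt ?_
      have he0 : (0:ℝ) ≤ ‖⟪A (k lam), k lam⟫_ℂ‖ ^ 2 + ‖A (k lam)‖ ^ 4 := by positivity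
      nlinarith [Real.sq_sqrt hN0, Real.sqrt_nonneg N, hlam lam]
    calc (eta k A) ^ 4 ≤ (Real.sqrt (Real.sqrt N)) ^ 4 := pow_le_pow_left₀ heta0 heta 4
      _ = ((Real.sqrt (Real.sqrt N)) ^ 2) ^ 2 := by ring
      _ = N := by rw [Real.sq_sqrt (Real.sqrt_nonneg N), Real.sq_sqrt hN0]
  refine ⟨key, ?_⟩
  haveI : Nonempty (Set.Icc (0:ℝ) 1) := ⟨⟨0, Set.mem_Icc.mpr ⟨le_refl 0, zero_le_one⟩⟩⟩
  exact le_ciInf (fun p => key p.1 p.2)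
end

section
/- Let A be a bounded linear operator on H. Then for every α ∈ [0,1], η(A)² ≤ (α/2)·ber(A²) + ‖ (α/4)|A|² + (1 − 3α/4)|A*|² + |A|⁴ ‖_ber. -/
open scoped InnerProductSpace
open ContinuousLinearMap

variable {H : Type*} [NormedAddCommGroup H] [InnerProductSpace ℂ H] [CompleteSpace H]
variable {Ω : Type*} [Nonempty Ω]

/-- Buzano's inequality. -/
theorem buzano_ineq (e u v : H) (he : ‖e‖ = 1) :
    ‖⟪u, e⟫_ℂ * ⟪e, v⟫_ℂ‖ ≤ (‖u‖ * ‖v‖ + ‖⟪u, v⟫_ℂ‖) / 2 := by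
  set w : H := (2 : ℂ) • ⟪e, u⟫_ℂ • e - u with hwdef
  have hee : ⟪e, e⟫_ℂ = 1 := by
    rw [@inner_self_eq_norm_sq_to_K ℂ, he]; norm_num
  have key : (2 : ℂ) * (⟪u, e⟫_ℂ * ⟪e, v⟫_ℂ) = ⟪u, v⟫_ℂ + ⟪w, v⟫_ℂ := by
    simp only [hwdef, inner_sub_left, inner_smul_left, inner_conj_symm, map_ofNat]
    ring
  have hww : ⟪w, w⟫_ℂ = ⟪u, u⟫_ℂ := by
    simp only [hwdef, inner_sub_sub_self, inner_smul_left, inner_smul_right,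
      inner_conj_symm, map_ofNat, hee]
    ring
  have hw : ‖w‖ = ‖u‖ := by
    have h2 : ‖w‖ ^ 2 = ‖u‖ ^ 2 := by
      rw [← @inner_self_eq_norm_sq ℂ, ← @inner_self_eq_norm_sq ℂ, hww]
    nlinarith [norm_nonneg w, norm_nonneg u]
  have h3 : ‖(2 : ℂ) * (⟪u, e⟫_ℂ * ⟪e, v⟫_ℂ)‖ ≤ ‖⟪u, v⟫_ℂ‖ + ‖u‖ * ‖v‖ := by
    rw [key]
    calc ‖⟪u, v⟫_ℂ + ⟪w, v⟫_ℂ‖ ≤ ‖⟪u, v⟫_ℂ‖ + ‖⟪w, v⟫_ℂ‖ := norm_add_le _ _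
      _ ≤ ‖⟪u, v⟫_ℂ‖ + ‖w‖ * ‖v‖ := by gcongr; exact norm_inner_le_norm w v
      _ = ‖⟪u, v⟫_ℂ‖ + ‖u‖ * ‖v‖ := by rw [hw]
  rw [norm_mul] at h3
  simp only [Complex.norm_ofNat] at h3
  linarith

lemma absop_sq (A : H →L[ℂ] H) : absop A ^ 2 = adjoint A * A := by
  unfold absop
  exact CFC.sq_sqrt _ (by rw [← star_eq_adjoint]; exact star_mul_self_nonneg A)

lemma absop_pow4 (A : H →L[ℂ] H) :
    absop A ^ 4 = adjoint (adjoint A * A) * (adjoint A * A) := by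
  have h : adjoint (adjoint A * A) = adjoint A * A := by
    rw [← star_eq_adjoint (adjoint A * A), star_mul, ← star_eq_adjoint A, star_star,
      star_eq_adjoint]
  rw [h, show (4 : ℕ) = 2 * 2 from rfl, pow_mul, absop_sq, sq]

theorem stmt14 (k : Ω → H) (hk : ∀ lam, ‖k lam‖ = 1) (A : H →L[ℂ] H)
    (α : ℝ) (hα : α ∈ Set.Icc (0 : ℝ) 1) :
    (eta k A) ^ 2 ≤
      (α / 2) * ber k (A ^ 2) +
        bernorm k (((α / 4 : ℝ) : ℂ) • (absop A) ^ 2 +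
          ((1 - 3 * α / 4 : ℝ) : ℂ) • (absop (adjoint A)) ^ 2 + (absop A) ^ 4) := by
  obtain ⟨hα0, hα1⟩ := hα
  set B : H →L[ℂ] H := ((α / 4 : ℝ) : ℂ) • (absop A) ^ 2 +
      ((1 - 3 * α / 4 : ℝ) : ℂ) • (absop (adjoint A)) ^ 2 + (absop A) ^ 4 with hBdef
  set R : ℝ := (α / 2) * ber k (A ^ 2) + bernorm k B with hRdef
  -- boundedness facts
  have hberbound : ∀ lam : Ω, ‖⟪(A ^ 2) (k lam), k lam⟫_ℂ‖ ≤ ‖(A ^ 2 : H →L[ℂ] H)‖ := by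
    intro lam
    calc ‖⟪(A ^ 2) (k lam), k lam⟫_ℂ‖ ≤ ‖(A ^ 2) (k lam)‖ * ‖k lam‖ := norm_inner_le_norm _ _
      _ ≤ ‖(A ^ 2 : H →L[ℂ] H)‖ * ‖k lam‖ * ‖k lam‖ := by
          gcongr; exact le_opNorm _ _
      _ = ‖(A ^ 2 : H →L[ℂ] H)‖ := by rw [hk lam]; ring
  have hberle : ∀ lam : Ω, ‖⟪(A ^ 2) (k lam), k lam⟫_ℂ‖ ≤ ber k (A ^ 2) := by
    intro lam
    exact le_ciSup ⟨‖(A ^ 2 : H →L[ℂ] H)‖, Set.forall_mem_range.2 hberbound⟩ lam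
  have hbernormle : ∀ lam : Ω, ‖⟪B (k lam), k lam⟫_ℂ‖ ≤ bernorm k B := by
    intro lam
    have hbd : ∀ p : Ω × Ω, ‖⟪B (k p.1), k p.2⟫_ℂ‖ ≤ ‖B‖ := by
      intro p
      calc ‖⟪B (k p.1), k p.2⟫_ℂ‖ ≤ ‖B (k p.1)‖ * ‖k p.2‖ := norm_inner_le_norm _ _
        _ ≤ ‖B‖ * ‖k p.1‖ * ‖k p.2‖ := by gcongr; exact le_opNorm _ _
        _ = ‖B‖ := by rw [hk p.1, hk p.2]; ring
    exact le_ciSup (f := fun p : Ω × Ω => ‖⟪B (k p.1), k p.2⟫_ℂ‖)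
      ⟨‖B‖, Set.forall_mem_range.2 hbd⟩ (lam, lam)
  -- pointwise inequality
  have hpoint : ∀ lam : Ω,
      ‖⟪A (k lam), k lam⟫_ℂ‖ ^ 2 + ‖A (k lam)‖ ^ 4 ≤ R := by
    intro lam
    set x : H := k lam with hxdef
    have hx : ‖x‖ = 1 := hk lam
    set a : ℝ := ‖⟪A x, x⟫_ℂ‖ with hadef
    set nA : ℝ := ‖A x‖ with hnAdef
    set nAs : ℝ := ‖adjoint A x‖ with hnAsdef
    set c : ℝ := ‖(adjoint A * A) x‖ with hcdef
    set b2 : ℝ := ‖⟪(A ^ 2) x, x⟫_ℂ‖ with hb2def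
    -- Buzano step
    have hBuz : a ^ 2 ≤ (nA * nAs + b2) / 2 := by
      have h := buzano_ineq x (A x) (adjoint A x) hx
      have e1 : ⟪x, adjoint A x⟫_ℂ = ⟪A x, x⟫_ℂ := adjoint_inner_right A x x
      have e2 : ⟪A x, adjoint A x⟫_ℂ = ⟪(A ^ 2) x, x⟫_ℂ := by
        rw [adjoint_inner_right, show (A ^ 2) x = A (A x) by rw [pow_two]; rfl]
      rw [e1, e2, norm_mul] at h
      calc a ^ 2 = ‖⟪A x, x⟫_ℂ‖ * ‖⟪A x, x⟫_ℂ‖ := sq a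
        _ ≤ (nA * nAs + b2) / 2 := h
    -- a ≤ nAs
    have ha2 : a ≤ nAs := by
      have : ⟪x, adjoint A x⟫_ℂ = ⟪A x, x⟫_ℂ := adjoint_inner_right A x x
      calc a = ‖⟪x, adjoint A x⟫_ℂ‖ := by rw [this]
        _ ≤ ‖x‖ * ‖adjoint A x‖ := norm_inner_le_norm _ _
        _ = nAs := by rw [hx, one_mul]
    -- nA² ≤ c
    have hnAc : nA ^ 2 ≤ c := by
      have h1 : ⟪(adjoint A * A) x, x⟫_ℂ = ⟪A x, A x⟫_ℂ := by
        rw [ContinuousLinearMap.mul_apply, adjoint_inner_left]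
      have h2 : nA ^ 2 = (⟪(adjoint A * A) x, x⟫_ℂ).re := by
        rw [h1, ← RCLike.re_to_complex, @inner_self_eq_norm_sq ℂ]
      calc nA ^ 2 = (⟪(adjoint A * A) x, x⟫_ℂ).re := h2
        _ ≤ ‖⟪(adjoint A * A) x, x⟫_ℂ‖ := Complex.re_le_norm _
        _ ≤ ‖(adjoint A * A) x‖ * ‖x‖ := norm_inner_le_norm _ _
        _ = c := by rw [hx, mul_one]
    -- re of ⟪B x, x⟫
    have hBre : (⟪B x, x⟫_ℂ).re
        = (α / 4) * nA ^ 2 + (1 - 3 * α / 4) * nAs ^ 2 + c ^ 2 := by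
      have h1 : ⟪((absop A) ^ 2) x, x⟫_ℂ = ⟪A x, A x⟫_ℂ := by
        rw [absop_sq, ContinuousLinearMap.mul_apply, adjoint_inner_left]
      have h2 : ⟪((absop (adjoint A)) ^ 2) x, x⟫_ℂ = ⟪adjoint A x, adjoint A x⟫_ℂ := by
        rw [absop_sq, ContinuousLinearMap.mul_apply, adjoint_inner_left]
      have h3 : ⟪((absop A) ^ 4) x, x⟫_ℂ = ⟪(adjoint A * A) x, (adjoint A * A) x⟫_ℂ := by
        rw [absop_pow4, ContinuousLinearMap.mul_apply, adjoint_inner_left]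
      simp only [hBdef, ContinuousLinearMap.add_apply, ContinuousLinearMap.coe_smul',
        Pi.smul_apply, inner_add_left, inner_smul_left, Complex.conj_ofReal, h1, h2, h3]
      simp [Complex.add_re, Complex.mul_re, Complex.ofReal_re, Complex.ofReal_im,
        inner_self_im, ← RCLike.re_to_complex, @inner_self_eq_norm_sq ℂ]
      norm_num [RCLike.re_to_complex]
      simp only [← Complex.ofReal_pow, Complex.ofReal_re]
      rfl
    have hBle : (α / 4) * nA ^ 2 + (1 - 3 * α / 4) * nAs ^ 2 + c ^ 2 ≤ bernorm k B := by
      calc (α / 4) * nA ^ 2 + (1 - 3 * α / 4) * nAs ^ 2 + c ^ 2 = (⟪B x, x⟫_ℂ).re := hBre.symm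
        _ ≤ ‖⟪B x, x⟫_ℂ‖ := Complex.re_le_norm _
        _ ≤ bernorm k B := hbernormle lam
    -- combine
    have hb2le : (α / 2) * b2 ≤ (α / 2) * ber k (A ^ 2) :=
      mul_le_mul_of_nonneg_left (hberle lam) (by linarith)
    have ha0 : (0:ℝ) ≤ a := norm_nonneg _
    have hnA0 : (0:ℝ) ≤ nA := norm_nonneg _
    have hc0 : (0:ℝ) ≤ c := norm_nonneg _
    clear_value a nA nAs c b2
    clear hadef hnAdef hnAsdef hcdef hb2def hBre hx hxdef
    clear_value x B R
    have key : a ^ 2 + nA ^ 4 ≤ (α / 2) * b2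
        + ((α / 4) * nA ^ 2 + (1 - 3 * α / 4) * nAs ^ 2 + c ^ 2) := by
      have hAM : nA * nAs ≤ (nA ^ 2 + nAs ^ 2) / 2 := by linarith only [sq_nonneg (nA - nAs)]
      have hAM2 : (α / 2) * (nA * nAs) ≤ (α / 2) * ((nA ^ 2 + nAs ^ 2) / 2) :=
        mul_le_mul_of_nonneg_left hAM (by linarith)
      have ha2sq : a ^ 2 ≤ nAs ^ 2 := pow_le_pow_left₀ ha0 ha2 2
      have hB1 : α * (a ^ 2) ≤ α * ((nA * nAs + b2) / 2) :=
        mul_le_mul_of_nonneg_left hBuz hα0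
      have hB2 : (1 - α) * (a ^ 2) ≤ (1 - α) * (nAs ^ 2) :=
        mul_le_mul_of_nonneg_left ha2sq (by linarith)
      have hc4 : nA ^ 4 ≤ c ^ 2 := by
        calc nA ^ 4 = (nA ^ 2) ^ 2 := by ring
          _ ≤ c ^ 2 := pow_le_pow_left₀ (sq_nonneg nA) hnAc 2
      linarith only [hB1, hB2, hAM2, hc4]
    calc a ^ 2 + nA ^ 4 ≤ (α / 2) * b2
          + ((α / 4) * nA ^ 2 + (1 - 3 * α / 4) * nAs ^ 2 + c ^ 2) := key
      _ ≤ (α / 2) * ber k (A ^ 2) + bernorm k B := add_le_add hb2le hBle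
      _ = R := hRdef.symm
  -- R ≥ 0
  obtain ⟨lam₀⟩ := ‹Nonempty Ω›
  have hR0 : 0 ≤ R := le_trans (by positivity) (hpoint lam₀)
  -- eta ≤ sqrt R
  have hetale : eta k A ≤ Real.sqrt R := by
    apply ciSup_le
    intro lam
    exact Real.sqrt_le_sqrt (hpoint lam)
  have heta0 : 0 ≤ eta k A := Real.iSup_nonneg fun _ => Real.sqrt_nonneg _
  calc (eta k A) ^ 2 ≤ (Real.sqrt R) ^ 2 := by gcongr
    _ = R := Real.sq_sqrt hR0
end
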